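/- arXiv:1904.08656 — 3 statements merged into one kernel-verified Lean document; each statement's English description precedes it below -/
import Mathlib

section
/- Let S₁ and S₂ be solids of PG(6,q) with dim(S₁ ∩ S₂) ≤ 2 (in projective terms: S₁ and S₂ meet in at most a line), and let P be a point with P ⊄ S₁ and P ⊄ S₂. Then the number of planes E with P ⊆ E, E ∩ S₁ ≠ 0 and E ∩ S₂ ≠ 0 is at most 2q^6 + 2q^5 + 3q^4 + 2q^3 + 2q^2 + q + 1. -/
variable {F V : Type*} [Field F] [AddCommGroup V] [Module F V]

/-- A plane-solid flag of PG(6,q): a pair (E,S) with E a plane (3-dim subspace),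
S a solid (4-dim subspace) and E ⊆ S. -/
def IsFlag (f : Submodule F V × Submodule F V) : Prop :=
  Module.finrank F f.1 = 3 ∧ Module.finrank F f.2 = 4 ∧ f.1 ≤ f.2

/-- Two flags are in general position if E ∩ S' = 0 and E' ∩ S = 0. -/
def GenPos (f g : Submodule F V × Submodule F V) : Prop :=
  f.1 ⊓ g.2 = ⊥ ∧ g.1 ⊓ f.2 = ⊥

/-- An independent set of plane-solid flags: a set of flags no two distinct members
of which are in general position. -/
def IsIndep (C : Set (Submodule F V × Submodule F V)) : Prop :=
  (∀ f ∈ C, IsFlag f) ∧ ∀ f ∈ C, ∀ g ∈ C, f ≠ g → ¬ GenPos f g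

/-- A maximal independent set of plane-solid flags. -/
def IsMaxIndep (C : Set (Submodule F V × Submodule F V)) : Prop :=
  IsIndep C ∧ ∀ D : Set (Submodule F V × Submodule F V), IsIndep D → C ⊆ D → C = D

set_option linter.unusedSectionVars false
set_option maxHeartbeats 2000000

open Module Submodule

lemma ncard_prod' {α β : Type*} (s : Set α) (t : Set β) :
    (s ×ˢ t).ncard = s.ncard * t.ncard := by
  rw [← Nat.card_coe_set_eq, Nat.card_congr (Equiv.Set.prod s t), Nat.card_prod,
    Nat.card_coe_set_eq, Nat.card_coe_set_eq]

lemma cancel_le' {n c m B co : ℕ} (h : n * m + co ≤ B) (hB : B = c * m + co) (hm : 0 < m) :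
    n ≤ c := by
  rw [hB] at h
  exact Nat.le_of_mul_le_mul_right (Nat.add_le_add_iff_right.mp h) hm

section helpers

variable {K W : Type*} [Field K] [AddCommGroup W] [Module K W]
variable [Fintype K] [FiniteDimensional K W]

lemma ncard_coe_submodule (N : Submodule K W) :
    (N : Set W).ncard = Fintype.card K ^ finrank K N := by
  classical
  have : Finite W := Module.finite_of_finite K
  letI : Fintype W := Fintype.ofFinite W
  rw [← Nat.card_coe_set_eq]
  rw [show Nat.card (N : Set W) = Nat.card N from rfl, Nat.card_eq_fintype_card,
    card_eq_pow_finrank (K := K) (V := N)]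

lemma ncard_sdiff_submodule {L N : Submodule K W} (h : L ≤ N) :
    ((N : Set W) \ (L : Set W)).ncard + Fintype.card K ^ finrank K L
      = Fintype.card K ^ finrank K N := by
  have : Finite W := Module.finite_of_finite K
  rw [← ncard_coe_submodule L, ← ncard_coe_submodule N]
  exact Set.ncard_diff_add_ncard_of_subset h (Set.toFinite _)

lemma rank1_inf {x B : Submodule K W} (hx : finrank K x = 1) (h : ¬ x ≤ B) :
    x ⊓ B = ⊥ := by
  rcases eq_or_lt_of_le (inf_le_left : x ⊓ B ≤ x) with he | hlt
  · exact absurd (he ▸ inf_le_right) h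
  · have := Submodule.finrank_lt_finrank_of_lt hlt
    rw [hx] at this
    have h0 : finrank K (x ⊓ B : Submodule K W) = 0 := by omega
    exact (Submodule.finrank_eq_zero).mp h0

lemma rank1_le_of_mem {x : Submodule K W} {v : W} (hx : finrank K x = 1)
    (hv : v ∈ x) (hv0 : v ≠ 0) {B : Submodule K W} (hvB : v ∈ B) : x ≤ B := by
  have hsp : (K ∙ v) = x := by
    apply Submodule.eq_of_le_of_finrank_le
      ((Submodule.span_singleton_le_iff_mem v x).mpr hv)
    rw [hx, finrank_span_singleton hv0]
  rw [← hsp]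
  exact (Submodule.span_singleton_le_iff_mem v B).mpr hvB

lemma exists_point {N : Submodule K W} (h : N ≠ ⊥) :
    ∃ x : Submodule K W, finrank K x = 1 ∧ x ≤ N := by
  obtain ⟨v, hvN, hv0⟩ := Submodule.exists_mem_ne_zero_of_ne_bot h
  exact ⟨K ∙ v, finrank_span_singleton hv0, (Submodule.span_singleton_le_iff_mem v N).mpr hvN⟩

lemma pack (𝒜 : Set (Submodule K W)) (L : Submodule K W) (T : Set W) (m : ℕ)
    (hmeet : ∀ E ∈ 𝒜, ∀ E' ∈ 𝒜, E ≠ E' → E ⊓ E' ≤ L)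
    (hsub : ∀ E ∈ 𝒜, ((E : Set W) \ (L : Set W)) ⊆ T)
    (hm : ∀ E ∈ 𝒜, ((E : Set W) \ (L : Set W)).ncard = m) :
    𝒜.ncard * m ≤ T.ncard := by
  classical
  have : Finite W := Module.finite_of_finite K
  letI : Fintype W := Fintype.ofFinite W
  have hfinA : Finite (Submodule K W) :=
    Finite.of_injective (fun N => (N : Set W)) SetLike.coe_injective
  have hA : 𝒜.Finite := Set.toFinite _
  set A : Finset (Submodule K W) := hA.toFinset with hAdef
  set g : Submodule K W → Finset W := fun E => ((E : Set W) \ (L : Set W)).toFinset with hg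
  have hdisj : ∀ E ∈ A, ∀ E' ∈ A, E ≠ E' → Disjoint (g E) (g E') := by
    intro E hE E' hE' hne
    rw [Finset.disjoint_left]
    intro v hv hv'
    simp only [hg, Set.mem_toFinset, Set.mem_diff, SetLike.mem_coe] at hv hv'
    exact hv.2 (hmeet E (hA.mem_toFinset.mp hE) E' (hA.mem_toFinset.mp hE') hne ⟨hv.1, hv'.1⟩)
  have hgcard : ∀ E ∈ A, (g E).card = m := by
    intro E hE
    rw [hg]
    rw [← Set.ncard_eq_toFinset_card']
    exact hm E (hA.mem_toFinset.mp hE)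
  have hcard : (A.biUnion g).card = A.card * m := by
    rw [Finset.card_biUnion hdisj, Finset.sum_congr rfl hgcard, Finset.sum_const, smul_eq_mul]
  have hsubT : A.biUnion g ⊆ T.toFinset := by
    intro v hv
    simp only [Finset.mem_biUnion] at hv
    obtain ⟨E, hE, hvE⟩ := hv
    rw [Set.mem_toFinset]
    exact hsub E (hA.mem_toFinset.mp hE) (by simpa [hg, Set.mem_toFinset] using hvE)
  have hle := Finset.card_le_card hsubT
  rw [hcard] at hle
  rw [Set.ncard_eq_toFinset_card 𝒜 hA, Set.ncard_eq_toFinset_card']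
  exact hle

lemma points_bound (N B : Submodule K W) :
    {x : Submodule K W | finrank K x = 1 ∧ x ≤ N ∧ ¬ x ≤ B}.ncard * (Fintype.card K - 1)
      ≤ ((N : Set W) \ (B : Set W)).ncard := by
  apply pack _ ⊥ _ _
  · intro x hx x' hx' hne
    by_cases hle : x ≤ x'
    · exact absurd (Submodule.eq_of_le_of_finrank_le hle (by rw [hx.1, hx'.1])) hne
    · rw [rank1_inf hx.1 hle]
  · rintro x ⟨hx1, hxN, hxB⟩ v ⟨hvx, hv0⟩
    rw [Submodule.bot_coe, Set.mem_singleton_iff] at hv0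
    refine ⟨hxN hvx, fun hvB => hxB (rank1_le_of_mem hx1 hvx hv0 hvB)⟩
  · intro x hx
    have h := ncard_sdiff_submodule (bot_le : (⊥ : Submodule K W) ≤ x)
    rw [finrank_bot, pow_zero, hx.1, pow_one] at h
    omega

lemma points_card_le (N : Submodule K W) :
    {x : Submodule K W | finrank K x = 1 ∧ x ≤ N}.ncard * (Fintype.card K - 1) + 1
      ≤ Fintype.card K ^ finrank K N := by
  have h1 : {x : Submodule K W | finrank K x = 1 ∧ x ≤ N}
      = {x : Submodule K W | finrank K x = 1 ∧ x ≤ N ∧ ¬ x ≤ (⊥ : Submodule K W)} := by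
    ext x
    simp only [Set.mem_setOf_eq, and_congr_right_iff, le_bot_iff]
    intro hx1
    have : x ≠ ⊥ := by
      intro h
      rw [h, finrank_bot] at hx1
      omega
    tauto
  have h2 := points_bound N (⊥ : Submodule K W)
  rw [← h1] at h2
  have h3 := ncard_sdiff_submodule (bot_le : (⊥ : Submodule K W) ≤ N)
  rw [finrank_bot, pow_zero] at h3
  omega

end helpers

theorem stmt16 {q : ℕ} [Fintype F] [FiniteDimensional F V]
    (hq : Fintype.card F = q) (hV : Module.finrank F V = 7)
    (S₁ S₂ : Submodule F V) (hS₁ : Module.finrank F S₁ = 4)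
    (hS₂ : Module.finrank F S₂ = 4) (hmeet : Module.finrank F ↥(S₁ ⊓ S₂) ≤ 2)
    (P : Submodule F V) (hP : Module.finrank F P = 1)
    (hP₁ : ¬ P ≤ S₁) (hP₂ : ¬ P ≤ S₂) :
    {E : Submodule F V | Module.finrank F E = 3 ∧ P ≤ E ∧
        E ⊓ S₁ ≠ ⊥ ∧ E ⊓ S₂ ≠ ⊥}.ncard ≤
      2 * q ^ 6 + 2 * q ^ 5 + 3 * q ^ 4 + 2 * q ^ 3 + 2 * q ^ 2 + q + 1 := by
  classical
  subst hq
  set Q := Fintype.card F with hQdef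
  have hq2 : 2 ≤ Q := Fintype.one_lt_card
  obtain ⟨r, hrQ⟩ : ∃ r, Q = r + 1 := ⟨Q - 1, by omega⟩
  have hr1 : 1 ≤ r := by omega
  have hr0 : 0 < r := hr1
  have hfinV : Finite V := Module.finite_of_finite F
  have hfinSub : Finite (Submodule F V) :=
    Finite.of_injective (fun N => (N : Set V)) SetLike.coe_injective
  set U : Submodule F V := (S₁ ⊔ P) ⊓ (S₂ ⊔ P) with hU
  set d := finrank F U with hd
  have hPU : P ≤ U := le_inf le_sup_right le_sup_right
  -- basic rank facts
  have hPS₁ : P ⊓ S₁ = ⊥ := rank1_inf hP hP₁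
  have hPS₂ : P ⊓ S₂ = ⊥ := rank1_inf hP hP₂
  have hrT₁ : finrank F (S₁ ⊔ P : Submodule F V) = 5 := by
    have h := Submodule.finrank_sup_add_finrank_inf_eq S₁ P
    rw [inf_comm, hPS₁, finrank_bot, hS₁, hP] at h
    omega
  have hrT₂ : finrank F (S₂ ⊔ P : Submodule F V) = 5 := by
    have h := Submodule.finrank_sup_add_finrank_inf_eq S₂ P
    rw [inf_comm, hPS₂, finrank_bot, hS₂, hP] at h
    omega
  have hd34 : 3 ≤ d ∧ d ≤ 4 := by
    have h1 := Submodule.finrank_sup_add_finrank_inf_eq (S₁ ⊔ P) (S₂ ⊔ P)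
    have h2 := Submodule.finrank_sup_add_finrank_inf_eq S₁ S₂
    have h3 : S₁ ⊔ S₂ ≤ (S₁ ⊔ P) ⊔ (S₂ ⊔ P) := sup_le_sup le_sup_left le_sup_left
    have h4 := Submodule.finrank_mono h3
    have h5 : finrank F ((S₁ ⊔ P) ⊔ (S₂ ⊔ P) : Submodule F V) ≤ 7 :=
      hV ▸ Submodule.finrank_le _
    rw [hrT₁, hrT₂] at h1
    rw [hS₁, hS₂] at h2
    rw [← hU, ← hd] at h1
    omega
  have hk₁ : d - 1 ≤ finrank F (S₁ ⊓ U : Submodule F V) := by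
    have h1 : S₁ ⊔ U ≤ S₁ ⊔ P := sup_le le_sup_left inf_le_left
    have h2 := Submodule.finrank_mono h1
    have h3 := Submodule.finrank_sup_add_finrank_inf_eq S₁ U
    rw [hrT₁] at h2
    rw [hS₁, ← hd] at h3
    omega
  have hk₂ : d - 1 ≤ finrank F (S₂ ⊓ U : Submodule F V) := by
    have h1 : S₂ ⊔ U ≤ S₂ ⊔ P := sup_le le_sup_left inf_le_right
    have h2 := Submodule.finrank_mono h1
    have h3 := Submodule.finrank_sup_add_finrank_inf_eq S₂ U
    rw [hrT₂] at h2
    rw [hS₂, ← hd] at h3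
    omega
  -- the three families
  set A1 : Set (Submodule F V) :=
    {E : Submodule F V | finrank F E = 3 ∧ P ≤ E ∧ E ≤ U} with hA1
  set A2 : Set (Submodule F V) :=
    {E : Submodule F V | finrank F E = 3 ∧ P ≤ E ∧ finrank F (E ⊓ U : Submodule F V) = 2}
    with hA2
  set B0 : Set (Submodule F V) :=
    {E : Submodule F V | (finrank F E = 3 ∧ P ≤ E ∧ E ⊓ S₁ ≠ ⊥ ∧ E ⊓ S₂ ≠ ⊥) ∧ E ⊓ U = P}
    with hB0
  have cover : {E : Submodule F V | finrank F E = 3 ∧ P ≤ E ∧ E ⊓ S₁ ≠ ⊥ ∧ E ⊓ S₂ ≠ ⊥}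
      ⊆ A1 ∪ A2 ∪ B0 := by
    rintro E ⟨h3, hPE, h1, h2⟩
    have hPEU : P ≤ E ⊓ U := le_inf hPE hPU
    have hle3 : finrank F (E ⊓ U : Submodule F V) ≤ 3 := by
      have := Submodule.finrank_mono (inf_le_left : E ⊓ U ≤ E)
      omega
    have hge1 : 1 ≤ finrank F (E ⊓ U : Submodule F V) := by
      have := Submodule.finrank_mono hPEU
      rw [hP] at this
      omega
    rcases (by omega : finrank F (E ⊓ U : Submodule F V) = 1 ∨
        finrank F (E ⊓ U : Submodule F V) = 2 ∨ finrank F (E ⊓ U : Submodule F V) = 3)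
      with h | h | h
    · exact Set.mem_union_right _ ⟨⟨h3, hPE, h1, h2⟩,
        (Submodule.eq_of_le_of_finrank_le hPEU (by rw [h, hP])).symm⟩
    · exact Set.mem_union_left _ (Set.mem_union_right _ ⟨h3, hPE, h⟩)
    · refine Set.mem_union_left _ (Set.mem_union_left _ ⟨h3, hPE, ?_⟩)
      have hEU : E ⊓ U = E := Submodule.eq_of_le_of_finrank_le inf_le_left (by rw [h, h3])
      rw [← hEU]
      exact inf_le_right
  -- key structural lemma for case B
  have keyA : ∀ Sa Sb : Submodule F V, finrank F Sa = 4 → ¬ P ≤ Sa → ¬ P ≤ Sb →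
      ∀ E : Submodule F V, finrank F E = 3 → P ≤ E → E ⊓ Sa ≠ ⊥ → E ⊓ Sb ≠ ⊥ →
      E ⊓ ((Sa ⊔ P) ⊓ (Sb ⊔ P)) = P →
      finrank F (E ⊓ Sa : Submodule F V) = 1 ∧ ¬ E ⊓ Sa ≤ (Sa ⊔ P) ⊓ (Sb ⊔ P) := by
    intro Sa Sb h4a hPa hPb E h3 hPE h1a h1b hEU
    have hPSa : P ⊓ Sa = ⊥ := rank1_inf hP hPa
    have hge : 1 ≤ finrank F (E ⊓ Sa : Submodule F V) := by
      have h0 : finrank F (E ⊓ Sa : Submodule F V) ≠ 0 :=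
        fun h => h1a ((Submodule.finrank_eq_zero).mp h)
      omega
    have hle : finrank F (E ⊓ Sa : Submodule F V) ≤ 1 := by
      by_contra hcon
      push_neg at hcon
      have hPint : P ⊓ (E ⊓ Sa) = ⊥ := by
        have hsub : P ⊓ (E ⊓ Sa) ≤ P ⊓ Sa := inf_le_inf_left P inf_le_right
        rw [hPSa] at hsub
        exact le_bot_iff.mp hsub
      have hsupr : finrank F (P ⊔ (E ⊓ Sa) : Submodule F V)
          = 1 + finrank F (E ⊓ Sa : Submodule F V) := by
        have h := Submodule.finrank_sup_add_finrank_inf_eq P (E ⊓ Sa)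
        rw [hPint, finrank_bot, hP] at h
        omega
      have hsuple : P ⊔ (E ⊓ Sa) ≤ E := sup_le hPE inf_le_left
      have h5 := Submodule.finrank_mono hsuple
      rw [h3] at h5
      have hEeq : P ⊔ (E ⊓ Sa) = E :=
        Submodule.eq_of_le_of_finrank_le hsuple (by omega)
      have hETa : E ≤ Sa ⊔ P := by
        rw [← hEeq]
        exact sup_le le_sup_right (le_trans inf_le_right le_sup_left)
      obtain ⟨y, hy1, hyb⟩ := exists_point h1b
      have hyE : y ≤ E := hyb.trans inf_le_left
      have hyU : y ≤ E ⊓ ((Sa ⊔ P) ⊓ (Sb ⊔ P)) :=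
        le_inf hyE (le_inf (hyE.trans hETa) ((hyb.trans inf_le_right).trans le_sup_left))
      rw [hEU] at hyU
      have hyP : y = P := Submodule.eq_of_le_of_finrank_le hyU (by rw [hy1, hP])
      exact hPb (hyP ▸ (hyb.trans inf_le_right))
    refine ⟨by omega, fun hcon => ?_⟩
    have hsub : E ⊓ Sa ≤ P := by
      rw [← hEU]
      exact le_inf inf_le_left hcon
    have heq : E ⊓ Sa = P := Submodule.eq_of_le_of_finrank_le hsub (by rw [hP]; omega)
    exact hPa (heq ▸ inf_le_right)
  -- B0 bound by injection into pairs of points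
  set Pts1 : Set (Submodule F V) :=
    {x : Submodule F V | finrank F x = 1 ∧ x ≤ S₁ ∧ ¬ x ≤ U} with hPts1
  set Pts2 : Set (Submodule F V) :=
    {x : Submodule F V | finrank F x = 1 ∧ x ≤ S₂ ∧ ¬ x ≤ U} with hPts2
  have hB0facts : ∀ E ∈ B0,
      (finrank F (E ⊓ S₁ : Submodule F V) = 1 ∧ ¬ E ⊓ S₁ ≤ U) ∧
      (finrank F (E ⊓ S₂ : Submodule F V) = 1 ∧ ¬ E ⊓ S₂ ≤ U) := by
    rintro E ⟨⟨h3, hPE, h1, h2⟩, hEU⟩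
    constructor
    · exact keyA S₁ S₂ hS₁ hP₁ hP₂ E h3 hPE h1 h2 hEU
    · have hEU' : E ⊓ ((S₂ ⊔ P) ⊓ (S₁ ⊔ P)) = P := by
        rw [inf_comm (S₂ ⊔ P) (S₁ ⊔ P)]
        exact hEU
      have := keyA S₂ S₁ hS₂ hP₂ hP₁ E h3 hPE h2 h1 hEU'
      refine ⟨this.1, fun hcon => this.2 ?_⟩
      rw [inf_comm (S₂ ⊔ P) (S₁ ⊔ P)]
      exact hcon
  have hB0rec : ∀ E ∈ B0, E = (P ⊔ (E ⊓ S₁)) ⊔ (E ⊓ S₂) := by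
    intro E hE
    obtain ⟨⟨hx1, hx1U⟩, ⟨hx2, hx2U⟩⟩ := hB0facts E hE
    obtain ⟨⟨h3, hPE, h1, h2⟩, hEU⟩ := hE
    have hPx1 : P ⊓ (E ⊓ S₁) = ⊥ := by
      have hsub : P ⊓ (E ⊓ S₁) ≤ P ⊓ S₁ := inf_le_inf_left P inf_le_right
      rw [hPS₁] at hsub
      exact le_bot_iff.mp hsub
    have hr2 : finrank F (P ⊔ (E ⊓ S₁) : Submodule F V) = 2 := by
      have h := Submodule.finrank_sup_add_finrank_inf_eq P (E ⊓ S₁)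
      rw [hPx1, finrank_bot, hP, hx1] at h
      omega
    have hx2P : ¬ (E ⊓ S₂) ≤ P ⊔ (E ⊓ S₁) := by
      intro hcon
      have hle1 : E ⊓ S₂ ≤ S₁ ⊔ P := hcon.trans (sup_le le_sup_right
        (le_trans inf_le_right le_sup_left))
      have hle2 : E ⊓ S₂ ≤ S₂ ⊔ P := le_trans inf_le_right le_sup_left
      have : E ⊓ S₂ ≤ P := by
        rw [← hEU]
        exact le_inf inf_le_left (le_inf hle1 hle2)
      have heq : E ⊓ S₂ = P := Submodule.eq_of_le_of_finrank_le this (by rw [hP, hx2])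
      exact hP₂ (heq ▸ inf_le_right)
    have hinf2 : (P ⊔ (E ⊓ S₁)) ⊓ (E ⊓ S₂) = ⊥ := by
      rw [inf_comm]
      exact rank1_inf hx2 hx2P
    have hr3 : finrank F ((P ⊔ (E ⊓ S₁)) ⊔ (E ⊓ S₂) : Submodule F V) = 3 := by
      have h := Submodule.finrank_sup_add_finrank_inf_eq (P ⊔ (E ⊓ S₁)) (E ⊓ S₂)
      rw [hinf2, finrank_bot, hr2, hx2] at h
      omega
    have hsuple : (P ⊔ (E ⊓ S₁)) ⊔ (E ⊓ S₂) ≤ E :=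
      sup_le (sup_le hPE inf_le_left) inf_le_left
    exact (Submodule.eq_of_le_of_finrank_le hsuple (by rw [h3, hr3])).symm
  have hB0le : B0.ncard ≤ Pts1.ncard * Pts2.ncard := by
    rw [← ncard_prod']
    refine Set.ncard_le_ncard_of_injOn (fun E => (E ⊓ S₁, E ⊓ S₂)) ?_ ?_ (Set.toFinite _)
    · intro E hE
      obtain ⟨⟨hx1, hx1U⟩, ⟨hx2, hx2U⟩⟩ := hB0facts E hE
      exact ⟨⟨hx1, inf_le_right, hx1U⟩, ⟨hx2, inf_le_right, hx2U⟩⟩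
    · intro E hE E' hE' heq
      have h1 : E ⊓ S₁ = E' ⊓ S₁ := congrArg Prod.fst heq
      have h2 : E ⊓ S₂ = E' ⊓ S₂ := congrArg Prod.snd heq
      have hrec := hB0rec E hE
      rw [h1, h2, ← hB0rec E' hE'] at hrec
      exact hrec
  -- bounds on Pts1, Pts2
  have hPtsBound : ∀ (S : Submodule F V), finrank F S = 4 →
      d - 1 ≤ finrank F (S ⊓ U : Submodule F V) →
      ∀ c : ℕ, Fintype.card F ^ 4 = c * r + Fintype.card F ^ (d - 1) →
      {x : Submodule F V | finrank F x = 1 ∧ x ≤ S ∧ ¬ x ≤ U}.ncard ≤ c := by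
    intro S hS4 hkS c hc
    have hpb := points_bound (K := F) S U
    have hseteq : (S : Set V) \ (U : Set V)
        = (S : Set V) \ ((S ⊓ U : Submodule F V) : Set V) := by
      ext v
      simp only [Set.mem_diff, SetLike.mem_coe, Submodule.mem_inf]
      tauto
    rw [hseteq] at hpb
    have hsd := ncard_sdiff_submodule (inf_le_left : S ⊓ U ≤ S)
    rw [hS4] at hsd
    have hQr : Fintype.card F - 1 = r := by omega
    rw [hQr] at hpb
    have hpow : Fintype.card F ^ (d - 1) ≤ Fintype.card F ^ finrank F (S ⊓ U : Submodule F V) :=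
      Nat.pow_le_pow_right (by omega) hkS
    apply cancel_le' (B := Fintype.card F ^ 4) (co := Fintype.card F ^ (d - 1))
      (m := r) _ hc hr0
    calc {x : Submodule F V | finrank F x = 1 ∧ x ≤ S ∧ ¬ x ≤ U}.ncard * r
          + Fintype.card F ^ (d - 1)
        ≤ ((S : Set V) \ ((S ⊓ U : Submodule F V) : Set V)).ncard
          + Fintype.card F ^ finrank F (S ⊓ U : Submodule F V) := Nat.add_le_add hpb hpow
      _ = Fintype.card F ^ 4 := hsd
  -- lines through P inside U
  set Ls : Set (Submodule F V) :=
    {L : Submodule F V | finrank F L = 2 ∧ P ≤ L ∧ L ≤ U} with hLs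
  have hLsBound : ∀ c : ℕ, Fintype.card F ^ d = c * (Q * r) + Fintype.card F ^ 1 →
      Ls.ncard ≤ c := by
    intro c hc
    have hpk := pack Ls P ((U : Set V) \ (P : Set V)) (Q * r) ?_ ?_ ?_
    · have hsd := ncard_sdiff_submodule hPU
      rw [hP, ← hd] at hsd
      apply cancel_le' (B := Fintype.card F ^ d) (co := Fintype.card F ^ 1)
        (m := Q * r) _ hc (by positivity)
      calc Ls.ncard * (Q * r) + Fintype.card F ^ 1
          ≤ ((U : Set V) \ (P : Set V)).ncard + Fintype.card F ^ 1 :=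
            Nat.add_le_add_right hpk _
        _ = Fintype.card F ^ d := hsd
    · intro L hL L' hL' hne
      have hPll : P ≤ L ⊓ L' := le_inf hL.2.1 hL'.2.1
      by_cases hll : L ⊓ L' = L
      · exact absurd (Submodule.eq_of_le_of_finrank_le (hll ▸ inf_le_right)
          (by rw [hL.1, hL'.1])) hne
      · have hlt : L ⊓ L' < L := lt_of_le_of_ne inf_le_left hll
        have hfr := Submodule.finrank_lt_finrank_of_lt hlt
        rw [hL.1] at hfr
        have : P = L ⊓ L' := Submodule.eq_of_le_of_finrank_le hPll (by rw [hP]; omega)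
        exact le_of_eq this.symm
    · intro L hL
      exact Set.diff_subset_diff_left (SetLike.coe_subset_coe.mpr hL.2.2)
    · intro L hL
      have hsd := ncard_sdiff_submodule hL.2.1
      rw [hP, hL.1] at hsd
      have hid : Fintype.card F ^ 2 = Q * r + Fintype.card F ^ 1 := by
        rw [← hQdef, hrQ]; ring
      rw [hid] at hsd
      exact Nat.add_right_cancel hsd
  -- per-line fiber bound (planes meeting U exactly in L)
  have hFibBound : ∀ c : ℕ, Fintype.card F ^ 7 = c * (Q ^ 2 * r) + Fintype.card F ^ d →
      ∀ L ∈ Ls, {E : Submodule F V | finrank F E = 3 ∧ L ≤ E ∧ E ⊓ U = L}.ncard ≤ c := by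
    intro c hc L hL
    have hpos : 0 < Q ^ 2 * r := Nat.mul_pos (pow_pos (by omega) 2) hr0
    have hpk := pack {E : Submodule F V | finrank F E = 3 ∧ L ≤ E ∧ E ⊓ U = L} L
        (((⊤ : Submodule F V) : Set V) \ (U : Set V)) (Q ^ 2 * r) ?_ ?_ ?_
    · have hsd := ncard_sdiff_submodule (le_top : U ≤ (⊤ : Submodule F V))
      rw [finrank_top, hV, ← hd] at hsd
      apply cancel_le' (B := Fintype.card F ^ 7) (co := Fintype.card F ^ d)
        (m := Q ^ 2 * r) _ hc hpos
      calc {E : Submodule F V | finrank F E = 3 ∧ L ≤ E ∧ E ⊓ U = L}.ncard * (Q ^ 2 * r)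
            + Fintype.card F ^ d
          ≤ (((⊤ : Submodule F V) : Set V) \ (U : Set V)).ncard + Fintype.card F ^ d :=
            Nat.add_le_add_right hpk _
        _ = Fintype.card F ^ 7 := hsd
    · intro E hE E' hE' hne
      have hLl : L ≤ E ⊓ E' := le_inf hE.2.1 hE'.2.1
      by_contra hcon
      have hlt : L < E ⊓ E' := lt_of_le_of_ne hLl (fun h => hcon (le_of_eq h.symm))
      have hfr := Submodule.finrank_lt_finrank_of_lt hlt
      rw [hL.1] at hfr
      have hEeq : E ⊓ E' = E :=
        Submodule.eq_of_le_of_finrank_le inf_le_left (by rw [hE.1]; omega)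
      have hE'eq : E ⊓ E' = E' :=
        Submodule.eq_of_le_of_finrank_le inf_le_right (by rw [hE'.1]; omega)
      exact hne (hEeq ▸ hE'eq)
    · intro E hE v hv
      refine ⟨by simp, fun hvU => hv.2 ?_⟩
      have hvL : v ∈ E ⊓ U := ⟨hv.1, hvU⟩
      rw [hE.2.2] at hvL
      exact hvL
    · intro E hE
      have hsd := ncard_sdiff_submodule hE.2.1
      rw [hL.1, hE.1] at hsd
      have hid : Fintype.card F ^ 3 = Q ^ 2 * r + Fintype.card F ^ 2 := by
        rw [← hQdef, hrQ]; ring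
      rw [hid] at hsd
      exact Nat.add_right_cancel hsd
  -- A2 bound by fibering over the line E ⊓ U
  have hA2Bound : ∀ cf cl : ℕ,
      (∀ L ∈ Ls, {E : Submodule F V | finrank F E = 3 ∧ L ≤ E ∧ E ⊓ U = L}.ncard ≤ cf) →
      Ls.ncard ≤ cl → A2.ncard ≤ cf * cl := by
    intro cf cl hcf hcl
    have hA2fin : A2.Finite := Set.toFinite _
    have hLsfin : Ls.Finite := Set.toFinite _
    have hmapsto : ∀ E ∈ hA2fin.toFinset, E ⊓ U ∈ hLsfin.toFinset := by
      intro E hE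
      rw [Set.Finite.mem_toFinset] at hE ⊢
      exact ⟨hE.2.2, le_inf hE.2.1 hPU, inf_le_right⟩
    have hfil : ∀ L ∈ hLsfin.toFinset,
        (hA2fin.toFinset.filter (fun E => E ⊓ U = L)).card ≤ cf := by
      intro L hL
      rw [Set.Finite.mem_toFinset] at hL
      have hsubf : ((hA2fin.toFinset.filter (fun E => E ⊓ U = L)) : Set (Submodule F V)) ⊆
          {E : Submodule F V | finrank F E = 3 ∧ L ≤ E ∧ E ⊓ U = L} := by
        intro E hE
        simp only [Finset.coe_filter, Set.mem_setOf_eq, Set.Finite.mem_toFinset] at hE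
        exact ⟨hE.1.1, hE.2 ▸ inf_le_left, hE.2⟩
      calc (hA2fin.toFinset.filter (fun E => E ⊓ U = L)).card
          = ((hA2fin.toFinset.filter (fun E => E ⊓ U = L)) : Set (Submodule F V)).ncard :=
            (Set.ncard_coe_finset _).symm
        _ ≤ {E : Submodule F V | finrank F E = 3 ∧ L ≤ E ∧ E ⊓ U = L}.ncard :=
            Set.ncard_le_ncard hsubf (Set.toFinite _)
        _ ≤ cf := hcf L hL
    have hkey := Finset.card_le_mul_card_image_of_maps_to hmapsto cf hfil
    rw [← Set.ncard_eq_toFinset_card A2 hA2fin, ← Set.ncard_eq_toFinset_card Ls hLsfin] at hkey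
    exact hkey.trans (Nat.mul_le_mul_left cf hcl)
  -- main decomposition
  have hmain : {E : Submodule F V | finrank F E = 3 ∧ P ≤ E ∧ E ⊓ S₁ ≠ ⊥ ∧ E ⊓ S₂ ≠ ⊥}.ncard
      ≤ A1.ncard + A2.ncard + B0.ncard := by
    calc {E : Submodule F V | finrank F E = 3 ∧ P ≤ E ∧ E ⊓ S₁ ≠ ⊥ ∧ E ⊓ S₂ ≠ ⊥}.ncard
        ≤ (A1 ∪ A2 ∪ B0).ncard := Set.ncard_le_ncard cover (Set.toFinite _)
      _ ≤ (A1 ∪ A2).ncard + B0.ncard := Set.ncard_union_le _ _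
      _ ≤ A1.ncard + A2.ncard + B0.ncard :=
          Nat.add_le_add_right (Set.ncard_union_le _ _) _
  rcases (by omega : d = 3 ∨ d = 4) with hd3 | hd4
  · -- case dim U = 3
    have hd1 : d - 1 = 2 := by omega
    have hb1 : Pts1.ncard ≤ Q ^ 3 + Q ^ 2 := by
      apply hPtsBound S₁ hS₁ hk₁
      rw [hd1, ← hQdef, hrQ]; ring
    have hb2 : Pts2.ncard ≤ Q ^ 3 + Q ^ 2 := by
      apply hPtsBound S₂ hS₂ hk₂
      rw [hd1, ← hQdef, hrQ]; ring
    have hB0f : B0.ncard ≤ (Q ^ 3 + Q ^ 2) * (Q ^ 3 + Q ^ 2) :=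
      hB0le.trans (Nat.mul_le_mul hb1 hb2)
    have hLs3 : Ls.ncard ≤ Q + 1 := by
      apply hLsBound
      rw [hd3, ← hQdef, hrQ]; ring
    have hFib3 := hFibBound (Q ^ 4 + Q ^ 3 + Q ^ 2 + Q)
      (by rw [hd3, ← hQdef, hrQ]; ring)
    have hA2f : A2.ncard ≤ (Q ^ 4 + Q ^ 3 + Q ^ 2 + Q) * (Q + 1) := hA2Bound _ _ hFib3 hLs3
    have hA1f : A1.ncard ≤ 1 := by
      have hsub : A1 ⊆ {U} := by
        intro E hE
        have : E = U := Submodule.eq_of_le_of_finrank_le hE.2.2 (by rw [hE.1, ← hd]; omega)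
        exact Set.mem_singleton_iff.mpr this
      exact (Set.ncard_le_ncard hsub (Set.toFinite _)).trans_eq (Set.ncard_singleton U)
    have h56 : Q ^ 5 ≤ Q ^ 6 := Nat.pow_le_pow_right (by omega) (by omega)
    calc {E : Submodule F V | finrank F E = 3 ∧ P ≤ E ∧ E ⊓ S₁ ≠ ⊥ ∧ E ⊓ S₂ ≠ ⊥}.ncard
        ≤ A1.ncard + A2.ncard + B0.ncard := hmain
      _ ≤ 1 + (Q ^ 4 + Q ^ 3 + Q ^ 2 + Q) * (Q + 1) + (Q ^ 3 + Q ^ 2) * (Q ^ 3 + Q ^ 2) := by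
          exact Nat.add_le_add (Nat.add_le_add hA1f hA2f) hB0f
      _ ≤ 2 * Q ^ 6 + 2 * Q ^ 5 + 3 * Q ^ 4 + 2 * Q ^ 3 + 2 * Q ^ 2 + Q + 1 := by
          have hexp : 1 + (Q ^ 4 + Q ^ 3 + Q ^ 2 + Q) * (Q + 1)
              + (Q ^ 3 + Q ^ 2) * (Q ^ 3 + Q ^ 2)
              = Q ^ 6 + 3 * Q ^ 5 + 3 * Q ^ 4 + 2 * Q ^ 3 + 2 * Q ^ 2 + Q + 1 := by ring
          rw [hexp]
          have h56' : Q ^ 6 + 3 * Q ^ 5 ≤ 2 * Q ^ 6 + 2 * Q ^ 5 := by omega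
          omega
  · -- case dim U = 4
    have hd1 : d - 1 = 3 := by omega
    have hb1 : Pts1.ncard ≤ Q ^ 3 := by
      apply hPtsBound S₁ hS₁ hk₁
      rw [hd1, ← hQdef, hrQ]; ring
    have hb2 : Pts2.ncard ≤ Q ^ 3 := by
      apply hPtsBound S₂ hS₂ hk₂
      rw [hd1, ← hQdef, hrQ]; ring
    have hB0f : B0.ncard ≤ Q ^ 3 * Q ^ 3 := hB0le.trans (Nat.mul_le_mul hb1 hb2)
    have hLs4 : Ls.ncard ≤ Q ^ 2 + Q + 1 := by
      apply hLsBound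
      rw [hd4, ← hQdef, hrQ]; ring
    have hFib4 := hFibBound (Q ^ 4 + Q ^ 3 + Q ^ 2)
      (by rw [hd4, ← hQdef, hrQ]; ring)
    have hA2f : A2.ncard ≤ (Q ^ 4 + Q ^ 3 + Q ^ 2) * (Q ^ 2 + Q + 1) :=
      hA2Bound _ _ hFib4 hLs4
    -- A1 via dual annihilators: hyperplanes of the 4-dim U through P
    have hrankU : finrank F ↥U = 4 := by rw [← hd]; omega
    set PU : Submodule F ↥U := Submodule.comap U.subtype P with hPUc
    have hrPU : finrank F PU = 1 := by
      rw [(Submodule.comapSubtypeEquivOfLe hPU).finrank_eq, hP]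
    have hannP : finrank F PU.dualAnnihilator = 3 := by
      have hq1 := Submodule.finrank_quotient_add_finrank (M := ↥U) PU
      have he := LinearEquiv.finrank_eq (R := F) (M := (↥U ⧸ PU))
        (N := {x // x ∈ PU.dualAnnihilator}) (Subspace.quotEquivAnnihilator PU)
      rw [hrankU, hrPU] at hq1
      omega
    have hA1le : A1.ncard ≤ {x : Submodule F (Module.Dual F ↥U) |
        finrank F x = 1 ∧ x ≤ PU.dualAnnihilator}.ncard := by
      haveI : Finite (Module.Dual F ↥U) := Module.finite_of_finite F
      haveI : Finite (Submodule F (Module.Dual F ↥U)) :=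
        Finite.of_injective (fun N => (N : Set (Module.Dual F ↥U))) SetLike.coe_injective
      refine Set.ncard_le_ncard_of_injOn
        (fun E => (Submodule.comap U.subtype E).dualAnnihilator) ?_ ?_ (Set.toFinite _)
      · intro E hE
        simp only [Set.mem_setOf_eq]
        have hrE : finrank F (Submodule.comap U.subtype E) = 3 := by
          rw [(Submodule.comapSubtypeEquivOfLe hE.2.2).finrank_eq, hE.1]
        constructor
        · have hq1 := Submodule.finrank_quotient_add_finrank (M := ↥U)
            (Submodule.comap U.subtype E)
          have he := LinearEquiv.finrank_eq (R := F) (M := (↥U ⧸ Submodule.comap U.subtype E))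
            (N := {x // x ∈ (Submodule.comap U.subtype E).dualAnnihilator})
            (Subspace.quotEquivAnnihilator (Submodule.comap U.subtype E))
          rw [hrankU, hrE] at hq1
          omega
        · exact Subspace.dualAnnihilator_le_dualAnnihilator_iff.mpr
            (Submodule.comap_mono hE.2.1)
      · intro E hE E' hE' heq
        have h := Subspace.dualAnnihilator_inj.mp heq
        have h2 : Submodule.map U.subtype (Submodule.comap U.subtype E)
            = Submodule.map U.subtype (Submodule.comap U.subtype E') := by rw [h]
        rw [Submodule.map_comap_subtype, Submodule.map_comap_subtype,
          inf_eq_right.mpr hE.2.2, inf_eq_right.mpr hE'.2.2] at h2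
        exact h2
    have hA1f : A1.ncard ≤ Q ^ 2 + Q + 1 := by
      have hpc := points_card_le (K := F) PU.dualAnnihilator
      rw [hannP] at hpc
      have hQr : Fintype.card F - 1 = r := by omega
      rw [hQr] at hpc
      have hcan : {x : Submodule F (Module.Dual F ↥U) |
          finrank F x = 1 ∧ x ≤ PU.dualAnnihilator}.ncard ≤ Q ^ 2 + Q + 1 := by
        apply cancel_le' (B := Fintype.card F ^ 3) (co := 1) (m := r) hpc _ hr0
        rw [← hQdef, hrQ]; ring
      exact hA1le.trans hcan
    have hident : (Q ^ 2 + Q + 1) + (Q ^ 4 + Q ^ 3 + Q ^ 2) * (Q ^ 2 + Q + 1) + Q ^ 3 * Q ^ 3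
        = 2 * Q ^ 6 + 2 * Q ^ 5 + 3 * Q ^ 4 + 2 * Q ^ 3 + 2 * Q ^ 2 + Q + 1 := by ring
    calc {E : Submodule F V | finrank F E = 3 ∧ P ≤ E ∧ E ⊓ S₁ ≠ ⊥ ∧ E ⊓ S₂ ≠ ⊥}.ncard
        ≤ A1.ncard + A2.ncard + B0.ncard := hmain
      _ ≤ (Q ^ 2 + Q + 1) + (Q ^ 4 + Q ^ 3 + Q ^ 2) * (Q ^ 2 + Q + 1) + Q ^ 3 * Q ^ 3 :=
          Nat.add_le_add (Nat.add_le_add hA1f hA2f) hB0f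
      _ = 2 * Q ^ 6 + 2 * Q ^ 5 + 3 * Q ^ 4 + 2 * Q ^ 3 + 2 * Q ^ 2 + Q + 1 := hident
end

section
/- Let C be a maximal independent set of plane-solid flags of PG(6,q). (i) For every solid S there exists a linear subspace U ⊆ S such that for every plane E ⊆ S one has (E,S) ∈ C if and only if U ⊆ E. (ii) For every plane E there exists a linear subspace U of V with E ⊆ U such that for every solid S with E ⊆ S one has (E,S) ∈ C if and only if S ⊆ U. -/
variable {F V : Type*} [Field F] [AddCommGroup V] [Module F V]

lemma genPos_symm {f g : Submodule F V × Submodule F V} (h : GenPos f g) : GenPos g f :=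
  ⟨h.2, h.1⟩

lemma flag_fst_ne_bot {f : Submodule F V × Submodule F V} (hf : IsFlag f) : f.1 ≠ ⊥ := by
  intro h
  have := hf.1
  rw [h, finrank_bot] at this
  exact absurd this (by norm_num)

/-- In a maximal independent set, a flag belongs to the set iff it is not in general
position with any member of the set. -/
lemma mem_maxIndep_iff {C : Set (Submodule F V × Submodule F V)} (hC : IsMaxIndep C)
    {f : Submodule F V × Submodule F V} (hf : IsFlag f) :
    f ∈ C ↔ ∀ g ∈ C, ¬ GenPos f g := by
  constructor
  · intro hfC g hg hGP
    by_cases hfg : f = g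
    · subst hfg
      have h1 : f.1 ⊓ f.2 = ⊥ := hGP.1
      rw [inf_eq_left.mpr hf.2.2] at h1
      exact flag_fst_ne_bot hf h1
    · exact hC.1.2 f hfC g hg hfg hGP
  · intro h
    have hD : IsIndep (C ∪ {f}) := by
      constructor
      · rintro g (hg | rfl)
        · exact hC.1.1 g hg
        · exact hf
      · rintro a (ha | rfl) b (hb | rfl) hab hGP
        · exact hC.1.2 a ha b hb hab hGP
        · exact h a ha (genPos_symm hGP)
        · exact h b hb hGP
        · exact hab rfl
    have := hC.2 (C ∪ {f}) hD Set.subset_union_left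
    rw [this]
    exact Or.inr rfl

section

variable [FiniteDimensional F V]

/-- A one-dimensional subspace meeting another subspace nontrivially is contained in it. -/
lemma le_of_inf_ne_bot {W E : Submodule F V} (hW : Module.finrank F W = 1)
    (h : E ⊓ W ≠ ⊥) : W ≤ E := by
  have h0 : Module.finrank F ↥(E ⊓ W) ≠ 0 := fun hz => h (Submodule.finrank_eq_zero.mp hz)
  have h1 : Module.finrank F ↥(E ⊓ W) ≤ 1 := hW ▸ Submodule.finrank_mono (inf_le_right : E ⊓ W ≤ W)
  have heq : E ⊓ W = W := by
    refine Submodule.eq_of_le_of_finrank_le inf_le_right ?_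
    omega
  rw [← heq]
  exact inf_le_left

/-- If g is a flag whose plane misses the solid S, then S meets the solid of g in a point. -/
lemma inf_finrank_one (hV : Module.finrank F V = 7) {S : Submodule F V}
    (hS : Module.finrank F S = 4) {g : Submodule F V × Submodule F V} (hg : IsFlag g)
    (hgS : g.1 ⊓ S = ⊥) : Module.finrank F ↥(S ⊓ g.2) = 1 := by
  have h1 := Submodule.finrank_sup_add_finrank_inf_eq g.1 S
  rw [hgS, finrank_bot, hg.1, hS] at h1
  have htop : g.1 ⊔ S = ⊤ := Submodule.eq_top_of_finrank_eq (by omega)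
  have htop2 : g.2 ⊔ S = ⊤ := by
    rw [eq_top_iff, ← htop]
    exact sup_le_sup_right hg.2.2 S
  have h2 := Submodule.finrank_sup_add_finrank_inf_eq S g.2
  rw [sup_comm, htop2, finrank_top, hV, hS, hg.2.1] at h2
  omega

end

theorem stmt18 {q : ℕ} [Fintype F] [FiniteDimensional F V]
    (hq : Fintype.card F = q) (hV : Module.finrank F V = 7)
    (C : Set (Submodule F V × Submodule F V)) (hC : IsMaxIndep C) :
    (∀ S : Submodule F V, Module.finrank F S = 4 →
      ∃ U : Submodule F V, U ≤ S ∧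
        ∀ E : Submodule F V, Module.finrank F E = 3 → E ≤ S →
          ((E, S) ∈ C ↔ U ≤ E)) ∧
    (∀ E : Submodule F V, Module.finrank F E = 3 →
      ∃ U : Submodule F V, E ≤ U ∧
        ∀ S : Submodule F V, Module.finrank F S = 4 → E ≤ S →
          ((E, S) ∈ C ↔ S ≤ U)) := by
  constructor
  · -- Part (i)
    intro S hS4
    refine ⟨sSup {W | ∃ g ∈ C, g.1 ⊓ S = ⊥ ∧ W = S ⊓ g.2}, ?_, ?_⟩
    · refine sSup_le ?_
      rintro W ⟨g, hg, hgS, rfl⟩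
      exact inf_le_left
    · intro E hE3 hES
      have hflag : IsFlag ((E, S) : Submodule F V × Submodule F V) := ⟨hE3, hS4, hES⟩
      rw [mem_maxIndep_iff hC hflag]
      constructor
      · intro h
        refine sSup_le ?_
        rintro W ⟨g, hg, hgS, rfl⟩
        have hGP := h g hg
        have hEg2 : E ⊓ g.2 ≠ ⊥ := by
          intro hb
          exact hGP ⟨hb, hgS⟩
        have hr1 : Module.finrank F ↥(S ⊓ g.2) = 1 :=
          inf_finrank_one hV hS4 (hC.1.1 g hg) hgS
        refine le_of_inf_ne_bot hr1 ?_
        rwa [← inf_assoc, inf_eq_left.mpr hES]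
      · intro hU g hg hGP
        have hW : S ⊓ g.2 ∈ {W | ∃ g ∈ C, g.1 ⊓ S = ⊥ ∧ W = S ⊓ g.2} :=
          ⟨g, hg, hGP.2, rfl⟩
        have hWE : S ⊓ g.2 ≤ E := le_trans (le_sSup hW) hU
        have hWbot : S ⊓ g.2 ≤ (⊥ : Submodule F V) := by
          rw [← hGP.1]
          exact le_inf hWE inf_le_right
        have hr1 : Module.finrank F ↥(S ⊓ g.2) = 1 :=
          inf_finrank_one hV hS4 (hC.1.1 g hg) hGP.2
        rw [le_bot_iff] at hWbot
        rw [hWbot, finrank_bot] at hr1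
        exact absurd hr1 (by norm_num)
  · -- Part (ii)
    intro E hE3
    refine ⟨sInf {W | ∃ g ∈ C, E ⊓ g.2 = ⊥ ∧ W = E ⊔ g.1}, ?_, ?_⟩
    · refine le_sInf ?_
      rintro W ⟨g, hg, hEg2, rfl⟩
      exact le_sup_left
    · intro S hS4 hES
      have hflag : IsFlag ((E, S) : Submodule F V × Submodule F V) := ⟨hE3, hS4, hES⟩
      rw [mem_maxIndep_iff hC hflag]
      constructor
      · intro h
        refine le_sInf ?_
        rintro W ⟨g, hg, hEg2, rfl⟩
        have hgflag := hC.1.1 g hg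
        have hGP := h g hg
        have hg1S : g.1 ⊓ S ≠ ⊥ := by
          intro hb
          exact hGP ⟨hEg2, hb⟩
        -- E ⊓ g.1 = ⊥
        have hEg1 : E ⊓ g.1 = ⊥ := by
          rw [eq_bot_iff, ← hEg2]
          exact inf_le_inf_left E hgflag.2.2
        -- finrank (E ⊔ g.1) = 6
        have h1 := Submodule.finrank_sup_add_finrank_inf_eq E g.1
        rw [hEg1, finrank_bot, hE3, hgflag.1] at h1
        -- finrank (S ⊔ g.1) ≤ 6
        have h2 := Submodule.finrank_sup_add_finrank_inf_eq S g.1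
        rw [hS4, hgflag.1] at h2
        have hpos : 0 < Module.finrank F ↥(S ⊓ g.1) := by
          refine Nat.pos_of_ne_zero fun hz => ?_
          exact absurd (Submodule.finrank_eq_zero.mp hz) (by rwa [inf_comm] at hg1S)
        have hle : E ⊔ g.1 ≤ S ⊔ g.1 := sup_le_sup_right hES g.1
        have heq : E ⊔ g.1 = S ⊔ g.1 := by
          refine Submodule.eq_of_le_of_finrank_le hle ?_
          omega
        rw [heq]
        exact le_sup_left
      · intro hU g hg hGP
        have hgflag := hC.1.1 g hg
        have hSEg1 : S ≤ E ⊔ g.1 :=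
          le_trans hU (sInf_le ⟨g, hg, hGP.1, rfl⟩)
        have hEg1 : E ⊓ g.1 = ⊥ := by
          rw [eq_bot_iff, ← hGP.1]
          exact inf_le_inf_left E hgflag.2.2
        have h1 := Submodule.finrank_sup_add_finrank_inf_eq E g.1
        rw [hEg1, finrank_bot, hE3, hgflag.1] at h1
        have h2 := Submodule.finrank_sup_add_finrank_inf_eq S g.1
        rw [hS4, hgflag.1] at h2
        have hz : Module.finrank F ↥(S ⊓ g.1) = 0 := by
          rw [inf_comm, hGP.2, finrank_bot]
        have hle : S ⊔ g.1 ≤ E ⊔ g.1 := sup_le hSEg1 le_sup_right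
        have := Submodule.finrank_mono hle
        omega
end

section
/- Let C be a maximal independent set of plane-solid flags of PG(6,q). (i) If S is a solid saturated for C, then E' ∩ S ≠ 0 for every flag (E',S') ∈ C. (ii) If S is a solid such that S ∩ E' ≠ 0 for every flag (E',S') ∈ C, then S is saturated for C. (iii) If S and S' are solids saturated for C, then dim(S ∩ S') ≥ 2 (in projective terms: S and S' share at least a line). (iv) If H is a hyperplane such that E ⊆ H for every flag (E,S) ∈ C, then every solid contained in H is saturated for C. -/
variable {F V : Type*} [Field F] [AddCommGroup V] [Module F V]

/-- A solid S is saturated for C if (E,S) ∈ C for every plane E ⊆ S. -/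
def Saturated (C : Set (Submodule F V × Submodule F V)) (S : Submodule F V) : Prop :=
  ∀ E : Submodule F V, Module.finrank F E = 3 → E ≤ S → (E, S) ∈ C

open Module

-- existence of a submodule of any small dimension inside a submodule
lemma exists_sub {M : Type*} [AddCommGroup M] [Module F M] [FiniteDimensional F M]
    {W : Submodule F M} {n : ℕ} (h : n ≤ finrank F W) :
    ∃ E : Submodule F M, E ≤ W ∧ finrank F E = n := by
  classical
  have b := finBasis F W
  set v : Fin n → M := fun i => (b (Fin.castLE h i) : M) with hv
  have hli : LinearIndependent F v := by
    have h1 : LinearIndependent F fun i : Fin (finrank F W) => ((b i : W) : M) :=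
      b.linearIndependent.map' W.subtype W.ker_subtype
    exact h1.comp (Fin.castLE h) (Fin.castLE_injective h)
  refine ⟨Submodule.span F (Set.range v), ?_, ?_⟩
  · rw [Submodule.span_le]
    rintro x ⟨i, rfl⟩
    exact (b (Fin.castLE h i)).2
  · rw [finrank_span_eq_card hli, Fintype.card_fin]


lemma exists_avoid [FiniteDimensional F V] {W P : Submodule F V} (hW : finrank F W = 4)
    (hPW : P ≤ W) (hP : finrank F P ≤ 1) :
    ∃ E : Submodule F V, E ≤ W ∧ finrank F E = 3 ∧ E ⊓ P = ⊥ := by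
  classical
  set P' : Submodule F W := P.comap W.subtype with hP'
  have hmap : P'.map W.subtype = P := by
    rw [hP', Submodule.map_comap_subtype, inf_eq_right.mpr hPW]
  have hrP' : finrank F P' ≤ 1 := by
    rw [← hmap] at hP
    rwa [Submodule.finrank_map_subtype_eq] at hP
  obtain ⟨Q, hQ⟩ := Submodule.exists_isCompl P'
  have hrQ : 3 ≤ finrank F Q := by
    have := Submodule.finrank_add_eq_of_isCompl hQ
    have hrW : finrank F (W : Submodule F V) = finrank F W := rfl
    omega
  obtain ⟨E', hE'Q, hE'3⟩ := exists_sub hrQ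
  refine ⟨E'.map W.subtype, ?_, ?_, ?_⟩
  · rintro x ⟨y, _, rfl⟩; exact y.2
  · rw [Submodule.finrank_map_subtype_eq]; exact hE'3
  · rw [eq_bot_iff]
    rintro x ⟨hx1, hx2⟩
    obtain ⟨y, hyE', rfl⟩ := hx1
    have hyP' : y ∈ P' := hx2
    have : y ∈ P' ⊓ Q := ⟨hyP', hE'Q hyE'⟩
    rw [hQ.inf_eq_bot] at this
    rw [Submodule.mem_bot] at this
    simp [this]


theorem stmt19 {q : ℕ} [Fintype F] [FiniteDimensional F V]
    (hq : Fintype.card F = q) (hV : Module.finrank F V = 7)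
    (C : Set (Submodule F V × Submodule F V)) (hC : IsMaxIndep C) :
    (∀ S : Submodule F V, Module.finrank F S = 4 → Saturated C S →
      ∀ f ∈ C, f.1 ⊓ S ≠ ⊥) ∧
    (∀ S : Submodule F V, Module.finrank F S = 4 →
      (∀ f ∈ C, S ⊓ f.1 ≠ ⊥) → Saturated C S) ∧
    (∀ S S' : Submodule F V, Module.finrank F S = 4 → Module.finrank F S' = 4 →
      Saturated C S → Saturated C S' → 2 ≤ Module.finrank F ↥(S ⊓ S')) ∧
    (∀ H : Submodule F V, Module.finrank F H = 6 →
      (∀ f ∈ C, f.1 ≤ H) →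
      ∀ S : Submodule F V, Module.finrank F S = 4 → S ≤ H → Saturated C S) := by
  -- part (i)
  have part1 : ∀ S : Submodule F V, Module.finrank F S = 4 → Saturated C S →
      ∀ f ∈ C, f.1 ⊓ S ≠ ⊥ := by
    intro S hS4 hSat f hf h0
    obtain ⟨hE'3, hS'4, hE'S'⟩ := hC.1.1 f hf
    -- f.1 ⊔ S = ⊤
    have hsum := Submodule.finrank_sup_add_finrank_inf_eq f.1 S
    rw [h0, finrank_bot] at hsum
    have htop : f.1 ⊔ S = ⊤ := by
      apply Submodule.eq_top_of_finrank_eq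
      rw [hV]; omega
    have htop2 : S ⊔ f.2 = ⊤ := by
      rw [eq_top_iff, ← htop]
      exact sup_le (le_sup_of_le_right hE'S') le_sup_left
    have hsum2 := Submodule.finrank_sup_add_finrank_inf_eq S f.2
    rw [htop2, finrank_top, hV] at hsum2
    have hint : finrank F ↥(S ⊓ f.2) ≤ 1 := by omega
    obtain ⟨E, hES, hE3, hEP⟩ := exists_avoid hS4 inf_le_left hint
    have hES' : E ⊓ f.2 = ⊥ := by
      have : E ⊓ f.2 = E ⊓ (S ⊓ f.2) := by
        rw [← inf_assoc, inf_eq_left.mpr hES]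
      rw [this, hEP]
    have hmem : (E, S) ∈ C := hSat E hE3 hES
    have hne : (E, S) ≠ f := by
      intro h
      have hS : S = f.2 := congrArg Prod.snd h
      have : f.1 ⊓ S = f.1 := inf_eq_left.mpr (hS ▸ hE'S')
      rw [this] at h0
      rw [h0, finrank_bot] at hE'3
      omega
    exact hC.1.2 (E, S) hmem f hf hne ⟨hES', h0⟩
  -- part (ii)
  have part2 : ∀ S : Submodule F V, Module.finrank F S = 4 →
      (∀ f ∈ C, S ⊓ f.1 ≠ ⊥) → Saturated C S := by
    intro S hS4 hyp E hE3 hES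
    have hD : IsIndep (insert (E, S) C) := by
      constructor
      · rintro f (rfl | hf)
        · exact ⟨hE3, hS4, hES⟩
        · exact hC.1.1 f hf
      · rintro f (rfl | hf) g (rfl | hg) hne hgp
        · exact hne rfl
        · exact hyp g hg (by rw [inf_comm]; exact hgp.2)
        · exact hyp f hf (by rw [inf_comm]; exact hgp.1)
        · exact hC.1.2 f hf g hg hne hgp
    have := hC.2 _ hD (Set.subset_insert _ _)
    rw [this]
    exact Set.mem_insert _ _
  refine ⟨part1, part2, ?_, ?_⟩
  · -- part (iii)
    intro S S' hS4 hS'4 hSat hSat'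
    by_contra h
    push_neg at h
    have hle : finrank F ↥(S ⊓ S') ≤ 1 := by omega
    obtain ⟨E', hE'S', hE'3, hE'P⟩ := exists_avoid hS'4 inf_le_right hle
    have hE'S : E' ⊓ S = ⊥ := by
      have h1 : E' ⊓ S = E' ⊓ (S ⊓ S') := by
        rw [inf_comm S S', ← inf_assoc, inf_eq_left.mpr hE'S']
      rw [h1, hE'P]
    have hmem : (E', S') ∈ C := hSat' E' hE'3 hE'S'
    exact part1 S hS4 hSat (E', S') hmem hE'S
  · -- part (iv)
    intro H hH6 hH S hS4 hSH
    apply part2 S hS4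
    intro f hf h0
    obtain ⟨hE3, _, _⟩ := hC.1.1 f hf
    have hsub : S ⊔ f.1 ≤ H := sup_le hSH (hH f hf)
    have hle : finrank F ↥(S ⊔ f.1) ≤ 6 := hH6 ▸ Submodule.finrank_mono hsub
    have hsum := Submodule.finrank_sup_add_finrank_inf_eq S f.1
    rw [h0, finrank_bot] at hsum
    omega
end
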